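/- Let d ≥ 3, ζ = ζ_d a primitive d-th root of unity, S = ℤ[ζ], and Λ = S ∘ ⟨τ⟩ the twisted group ring with τ² = 1 acting by τ·ζ = ζ^{-1}, where d is an odd prime power p^c. Then as left Λ-modules, Λ ≅ S ⊕ Q where Q = (ζ − ζ^{-1})S, with Λ acting on S and Q via (a·u_τ)·α = a·τ(α). -/

import Mathlib

/-- Let `d = p^c ≥ 3` be an odd prime power, `ζ` a primitive `d`-th root of unity,
`S = ℤ[ζ]` with conjugation `σ` (σ ζ = ζ⁻¹), and `Λ = S ∘ ⟨τ⟩` the twisted group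
ring, realized as pairs `(a,b) = a + b u_τ` with multiplication
`(a,b)(c,e) = (a c + b σ(e), a e + b σ(c))` (since `u_τ² = 1`).  `S` and the
ambiguous ideal `Q = (ζ − ζ⁻¹)S` are `Λ`-modules via `(a,b)·s = a s + b σ(s)`.
Then `Λ ≅ S ⊕ Q` as left `Λ`-modules. -/
theorem twisted_group_ring_decomposition
    (p c : ℕ) (hp : p.Prime) (hpo : Odd p) (hc : 1 ≤ c)
    (d : ℕ) (hd : d = p ^ c) (hd3 : 3 ≤ d)
    (ζ : ℂ) (hζ : IsPrimitiveRoot ζ d)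
    (σ : Algebra.adjoin ℤ ({ζ} : Set ℂ) ≃ₐ[ℤ] Algebra.adjoin ℤ ({ζ} : Set ℂ))
    (hσ : ((σ ⟨ζ, Algebra.self_mem_adjoin_singleton ℤ ζ⟩ :
        Algebra.adjoin ℤ ({ζ} : Set ℂ)) : ℂ) = ζ⁻¹) :
    let R := Algebra.adjoin ℤ ({ζ} : Set ℂ)
    let z : R := ⟨ζ, Algebra.self_mem_adjoin_singleton ℤ ζ⟩
    let mul : R × R → R × R → R × R := fun a b =>
      (a.1 * b.1 + a.2 * σ b.2, a.1 * b.2 + a.2 * σ b.1)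
    let act : R × R → R → R := fun a s => a.1 * s + a.2 * σ s
    let Q : Ideal R := Ideal.span {z - σ z}
    ∃ φ : (R × R) ≃+ (R × Q),
      ∀ a b : R × R,
        (φ (mul a b)).1 = act a ((φ b).1) ∧
        ((φ (mul a b)).2 : R) = act a (((φ b).2 : R)) := by
  intro R z mul act Q
  have hd0 : d ≠ 0 := by omega
  have hζ0 : ζ ≠ 0 := hζ.ne_zero hd0
  have hζd : ζ ^ d = 1 := hζ.pow_eq_one
  obtain ⟨m, hm⟩ : Odd d := by rw [hd]; exact hpo.pow
  -- ζ ^ (d-1) = ζ⁻¹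
  have hzpow : ζ ^ (d - 1) = ζ⁻¹ := by
    have h1 : ζ ^ (d - 1) * ζ = 1 := by
      rw [← pow_succ]
      have : d - 1 + 1 = d := by omega
      rw [this, hζd]
    exact eq_inv_of_mul_eq_one_left h1
  -- σ z as a power of z
  have hσz : σ z = z ^ (d - 1) := by
    apply Subtype.ext
    push_cast
    rw [hσ, hzpow]
  -- σ (σ z) = z
  have hσσz : σ (σ z) = z := by
    rw [hσz, map_pow, hσz]
    apply Subtype.ext
    push_cast
    rw [hzpow, inv_pow, hzpow, inv_inv]
  -- the generator π of Q
  set π : R := z - σ z with hπdef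
  have hπc : (π : ℂ) = ζ - ζ⁻¹ := by
    push_cast [hπdef, hσ]
    exact congrArg (fun x => (z : ℂ) - x) hσ
  have hπc0 : (π : ℂ) ≠ 0 := by
    rw [hπc, sub_ne_zero]
    intro h
    have h2 : ζ ^ 2 = 1 := by
      field_simp at h
      exact h
    have hdvd2 := (IsPrimitiveRoot.pow_eq_one_iff_dvd hζ 2).mp h2
    have := Nat.le_of_dvd (by norm_num) hdvd2
    omega
  have hπ0 : π ≠ 0 := fun h => hπc0 (by rw [h]; simp)
  -- cancellation by π
  have hcan : ∀ u v : R, π * u = π * v → u = v := by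
    intro u v h
    have h2 := congrArg (fun x : R => (x : ℂ)) h
    push_cast at h2
    exact Subtype.ext (mul_left_cancel₀ hπc0 h2)
  -- the auxiliary element t with π * t = 1 - σ z
  set t : R := ∑ i ∈ Finset.range (m + 1), z ^ (2 * i) with htdef
  have htc : (t : ℂ) = ∑ i ∈ Finset.range (m + 1), ζ ^ (2 * i) := by
    push_cast [htdef]
    rfl
  set w : R := 1 - σ z with hwdef
  set y : R := 1 - z with hydef
  have hwc : (w : ℂ) = 1 - ζ⁻¹ := by
    push_cast [hwdef, hσ]
    exact congrArg (fun x => (1 : ℂ) - x) hσ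
  have hw : π * t = w := by
    apply Subtype.ext
    push_cast [hπc, htc, hwc]
    have geo : (∑ i ∈ Finset.range (m + 1), (ζ ^ 2) ^ i) * (ζ ^ 2 - 1)
        = (ζ ^ 2) ^ (m + 1) - 1 := geom_sum_mul _ _
    have h2m : (ζ ^ 2) ^ (m + 1) = ζ := by
      rw [← pow_mul]
      have : 2 * (m + 1) = d + 1 := by omega
      rw [this, pow_succ, hζd, one_mul]
    rw [h2m] at geo
    have hsum : ∑ i ∈ Finset.range (m + 1), ζ ^ (2 * i)
        = ∑ i ∈ Finset.range (m + 1), (ζ ^ 2) ^ i := by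
      apply Finset.sum_congr rfl
      intro i _
      rw [pow_mul]
    rw [hsum]
    field_simp
    linear_combination geo
  have hy : π * (t - 1) = y := by
    rw [mul_sub, hw, mul_one, hwdef, hπdef, hydef]
    ring
  have hσy : σ y = w := by
    rw [hydef, hwdef, map_sub, map_one]
  have hσw : σ w = y := by
    rw [hydef, hwdef, map_sub, map_one, hσσz]
  -- membership of the second component in Q
  have hSadd : ∀ u v : R, σ (u + v) = σ u + σ v := fun u v => σ.map_add u v
  have hSmul : ∀ u v : R, σ (u * v) = σ u * σ v := fun u v => σ.map_mul u v
  have hmem : ∀ a b : R, a * y + b * w ∈ Q := by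
    intro a b
    apply Ideal.mem_span_singleton.mpr
    exact ⟨a * (t - 1) + b * t, by rw [← hy, ← hw]; ring⟩
  have hdvd : ∀ q : Q, ∃ r : R, (q : R) = π * r := by
    intro q
    obtain ⟨r, hr⟩ := Ideal.mem_span_singleton.mp q.2
    exact ⟨r, hr⟩
  refine ⟨{ toFun := fun a => (a.1 + a.2, ⟨a.1 * y + a.2 * w, hmem a.1 a.2⟩),
            invFun := fun sq => (sq.1 * t - (hdvd sq.2).choose,
              sq.1 - (sq.1 * t - (hdvd sq.2).choose)),
            left_inv := ?_, right_inv := ?_, map_add' := ?_ }, ?_⟩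
  · intro a
    set q : Q := ⟨a.1 * y + a.2 * w, hmem a.1 a.2⟩ with hq
    have hr : (q : R) = π * (hdvd q).choose := (hdvd q).choose_spec
    have hval : (q : R) = π * (a.1 * (t - 1) + a.2 * t) := by
      rw [hq]; simp only []; rw [← hy, ← hw]; ring
    have hre : (hdvd q).choose = a.1 * (t - 1) + a.2 * t :=
      hcan _ _ (by rw [← hr, hval])
    simp only [hre]
    apply Prod.ext
    · simp only []
      ring
    · simp only []
      ring
  · intro sq
    obtain ⟨s, q⟩ := sq
    have hr : (q : R) = π * (hdvd q).choose := (hdvd q).choose_spec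
    apply Prod.ext
    · simp only []
      ring
    · apply Subtype.ext
      simp only []
      rw [← hy, ← hw]
      linear_combination -hr
  · intro a b
    apply Prod.ext
    · simp only [Prod.fst_add, Prod.snd_add]
      ring
    · apply Subtype.ext
      simp only [Prod.snd_add, Submodule.coe_add, Prod.fst_add]
      ring
  · intro a b
    constructor
    · show (mul a b).1 + (mul a b).2 = act a (b.1 + b.2)
      simp only [mul, act]
      rw [hSadd]
      ring
    · show (mul a b).1 * y + (mul a b).2 * w = act a (b.1 * y + b.2 * w)
      simp only [mul, act]
      rw [hSadd, hSmul, hSmul, hσy, hσw]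
      ring
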